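/- For every positive integer n and every integer t: if n is odd then the sum over k from 0 to n of (-1)^{n-k} * (n/(n+k)) * C(n+k, n-k) * L_{3k+t} equals (5/2)·F_t·F_n, and if n is even the same sum equals (1/2)·L_t·L_n. -/

import Mathlib

open Finset

/-- Fibonacci numbers extended to all integers: `F_{-n} = (-1)^{n-1} F_n`. -/
def fibZ (n : ℤ) : ℤ :=
  if 0 ≤ n then Nat.fib n.toNat else (-1) ^ (n.natAbs + 1) * Nat.fib n.natAbs

/-- Lucas numbers extended to all integers: `L_n = F_{n-1} + F_{n+1}`. -/
def lucasZ (n : ℤ) : ℤ := fibZ (n - 1) + fibZ (n + 1)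

open Nat in
lemma key (e d : ℕ) :
    ((d:ℚ)+(e:ℚ)+3)/((d:ℚ)+2*(e:ℚ)+4) * (Nat.choose (d+2*e+4) (d+2) : ℚ)
    = ((d:ℚ)+(e:ℚ)+2)/((d:ℚ)+2*(e:ℚ)+2) * (Nat.choose (d+2*e+2) (d+2) : ℚ)
    + 2*(((d:ℚ)+(e:ℚ)+2)/((d:ℚ)+2*(e:ℚ)+3)) * (Nat.choose (d+2*e+3) (d+1) : ℚ)
    - ((d:ℚ)+(e:ℚ)+1)/((d:ℚ)+2*(e:ℚ)+2) * (Nat.choose (d+2*e+2) d : ℚ) := by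
  have c1 : ((d+2*e+4).choose (d+2) : ℚ)
      = ((d+2*e+4) ! : ℚ) / (((d+2) ! : ℚ) * ((2*e+2) ! : ℚ)) := by
    rw [Nat.cast_choose ℚ (by omega), show d+2*e+4-(d+2) = 2*e+2 by omega]
  have c2 : ((d+2*e+2).choose (d+2) : ℚ)
      = ((d+2*e+2) ! : ℚ) / (((d+2) ! : ℚ) * ((2*e) ! : ℚ)) := by
    rw [Nat.cast_choose ℚ (by omega), show d+2*e+2-(d+2) = 2*e by omega]
  have c3 : ((d+2*e+3).choose (d+1) : ℚ)
      = ((d+2*e+3) ! : ℚ) / (((d+1) ! : ℚ) * ((2*e+2) ! : ℚ)) := by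
    rw [Nat.cast_choose ℚ (by omega), show d+2*e+3-(d+1) = 2*e+2 by omega]
  have c4 : ((d+2*e+2).choose d : ℚ)
      = ((d+2*e+2) ! : ℚ) / ((d ! : ℚ) * ((2*e+2) ! : ℚ)) := by
    rw [Nat.cast_choose ℚ (by omega), show d+2*e+2-d = 2*e+2 by omega]
  have F1 : ((d+2*e+4) ! : ℚ) = ((d:ℚ)+2*e+4)*((d:ℚ)+2*e+3)*((d+2*e+2) ! : ℚ) := by
    rw [show d+2*e+4 = (d+2*e+3)+1 from rfl, Nat.factorial_succ,
        show d+2*e+3 = (d+2*e+2)+1 from rfl, Nat.factorial_succ]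
    push_cast; ring
  have F2 : ((d+2*e+3) ! : ℚ) = ((d:ℚ)+2*e+3)*((d+2*e+2) ! : ℚ) := by
    rw [show d+2*e+3 = (d+2*e+2)+1 from rfl, Nat.factorial_succ]; push_cast; ring
  have F3 : ((d+2) ! : ℚ) = ((d:ℚ)+2)*((d:ℚ)+1)*(d ! : ℚ) := by
    rw [show d+2 = (d+1)+1 from rfl, Nat.factorial_succ, Nat.factorial_succ]
    push_cast; ring
  have F4 : ((d+1) ! : ℚ) = ((d:ℚ)+1)*(d ! : ℚ) := by
    rw [Nat.factorial_succ]; push_cast; ring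
  have F5 : ((2*e+2) ! : ℚ) = (2*(e:ℚ)+2)*(2*(e:ℚ)+1)*((2*e) ! : ℚ) := by
    rw [show 2*e+2 = (2*e+1)+1 from rfl, Nat.factorial_succ, Nat.factorial_succ]
    push_cast; ring
  rw [c1, c2, c3, c4, F1, F2, F3, F4, F5]
  have hA : ((d+2*e+2) ! : ℚ) ≠ 0 := by positivity
  have hB : (d ! : ℚ) ≠ 0 := by positivity
  have hC : ((2*e) ! : ℚ) ≠ 0 := by positivity
  have h1 : (d:ℚ)+2*e+4 ≠ 0 := by positivity
  have h2 : (d:ℚ)+2*e+3 ≠ 0 := by positivity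
  have h3 : (d:ℚ)+2*e+2 ≠ 0 := by positivity
  have h4 : (d:ℚ)+2 ≠ 0 := by positivity
  have h5 : (d:ℚ)+1 ≠ 0 := by positivity
  have h6 : 2*(e:ℚ)+2 ≠ 0 := by positivity
  have h7 : 2*(e:ℚ)+1 ≠ 0 := by positivity
  field_simp
  ring

lemma fibZ_natCast (p : ℕ) : fibZ p = Nat.fib p := by simp [fibZ]

lemma fibZ_neg_natCast (p : ℕ) : fibZ (-(p:ℤ)) = (-1)^(p+1) * Nat.fib p := by
  cases p with
  | zero => simp [fibZ]
  | succ q =>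
    have h : ¬ (0:ℤ) ≤ -((q:ℤ)+1) := by omega
    simp only [fibZ, Nat.cast_succ, h, if_false]
    have : (-((q:ℤ)+1)).natAbs = q+1 := by omega
    rw [this]

lemma fibZ_rec (m : ℤ) : fibZ (m+2) = fibZ (m+1) + fibZ m := by
  rcases le_or_gt 0 m with h | h
  · lift m to ℕ using h
    have e2 : (m:ℤ)+2 = ((m+2:ℕ):ℤ) := by push_cast; ring
    have e1 : (m:ℤ)+1 = ((m+1:ℕ):ℤ) := by push_cast; ring
    rw [e2, e1, fibZ_natCast, fibZ_natCast, fibZ_natCast, Nat.fib_add_two]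
    push_cast; ring
  · obtain ⟨p, rfl⟩ : ∃ p : ℕ, m = -((p:ℤ)+1) := ⟨(-m-1).toNat, by omega⟩
    match p with
    | 0 => decide
    | 1 => decide
    | (q+2) =>
      have ee : -(((q+2:ℕ):ℤ)+1) = -((q:ℤ)+2+1) := by push_cast; ring
      rw [ee]
      have e2 : -((q:ℤ)+2+1)+2 = -((q+1:ℕ):ℤ) := by push_cast; ring
      have e1 : -((q:ℤ)+2+1)+1 = -((q+2:ℕ):ℤ) := by push_cast; ring
      have e0 : -((q:ℤ)+2+1) = -((q+3:ℕ):ℤ) := by push_cast; ring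
      rw [e2, e1, e0, fibZ_neg_natCast, fibZ_neg_natCast, fibZ_neg_natCast]
      have : Nat.fib (q+3) = Nat.fib (q+1) + Nat.fib (q+2) := Nat.fib_add_two
      rw [this]
      push_cast [pow_succ]
      ring

lemma lucasZ_rec (m : ℤ) : lucasZ (m+2) = lucasZ (m+1) + lucasZ m := by
  have A : fibZ (m+1) = fibZ m + fibZ (m-1) := by
    have := fibZ_rec (m-1)
    rwa [show m-1+2 = m+1 by ring, show m-1+1 = m by ring] at this
  have B : fibZ (m+3) = fibZ (m+2) + fibZ (m+1) := by
    have := fibZ_rec (m+1)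
    rwa [show m+1+2 = m+3 by ring, show m+1+1 = m+2 by ring] at this
  have C : fibZ (m+2) = fibZ (m+1) + fibZ m := fibZ_rec m
  unfold lucasZ
  rw [show m+2-1 = m+1 by ring, show m+2+1 = m+3 by ring,
      show m+1-1 = m by ring, show m+1+1 = m+2 by ring]
  linarith

lemma lucasZ_add (n : ℕ) : ∀ t : ℤ,
    (lucasZ (t+n) + (-1)^n * lucasZ (t-n) = lucasZ t * lucasZ n) ∧
    (lucasZ (t+n) - (-1)^n * lucasZ (t-n) = 5 * fibZ t * fibZ n) := by
  induction n using Nat.strong_induction_on with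
  | _ n ih =>
    match n with
    | 0 =>
      intro t
      have h0 : lucasZ 0 = 2 := by decide
      have f0 : fibZ 0 = 0 := by decide
      norm_num [h0, f0]
      ring
    | 1 =>
      intro t
      have h1 : lucasZ 1 = 1 := by decide
      have f1 : fibZ 1 = 1 := by decide
      have A : lucasZ (t+1) = lucasZ t + lucasZ (t-1) := by
        have := lucasZ_rec (t-1)
        rwa [show t-1+2 = t+1 by ring, show t-1+1 = t by ring] at this
      have B : fibZ t = fibZ (t-1) + fibZ (t-2) := by
        have := fibZ_rec (t-2)
        rwa [show t-2+2 = t by ring, show t-2+1 = t-1 by ring] at this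
      have C : fibZ (t+1) = fibZ t + fibZ (t-1) := by
        have := fibZ_rec (t-1)
        rwa [show t-1+2 = t+1 by ring, show t-1+1 = t by ring] at this
      have D : fibZ (t+2) = fibZ (t+1) + fibZ t := fibZ_rec t
      have E : lucasZ (t+1) = fibZ t + fibZ (t+2) := by
        unfold lucasZ
        rw [show t+1-1 = t by ring, show t+1+1 = t+2 by ring]
      have F : lucasZ (t-1) = fibZ (t-2) + fibZ t := by
        unfold lucasZ
        rw [show t-1-1 = t-2 by ring, show t-1+1 = t by ring]
      constructor
      · push_cast [h1]
        linarith
      · push_cast [f1]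
        linarith
    | (m+2) =>
      intro t
      have ih1 := ih (m+1) (by omega) t
      have ih0 := ih m (by omega) t
      have R1 : lucasZ (t+(m+2:ℕ)) = lucasZ (t+(m+1:ℕ)) + lucasZ (t+(m:ℕ)) := by
        have := lucasZ_rec (t+m)
        rw [show t+(m:ℤ)+2 = t+((m+2:ℕ):ℤ) by push_cast; ring,
            show t+(m:ℤ)+1 = t+((m+1:ℕ):ℤ) by push_cast; ring] at this
        rwa [show t+(m:ℤ) = t+((m:ℕ):ℤ) by norm_num] at this
      have R2 : lucasZ (t-(m:ℕ)) = lucasZ (t-(m+1:ℕ)) + lucasZ (t-(m+2:ℕ)) := by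
        have := lucasZ_rec (t-(m+2:ℕ))
        rwa [show t-((m+2:ℕ):ℤ)+2 = t-((m:ℕ):ℤ) by push_cast; ring,
            show t-((m+2:ℕ):ℤ)+1 = t-((m+1:ℕ):ℤ) by push_cast; ring] at this
      have RL : lucasZ ((m+2:ℕ)) = lucasZ ((m+1:ℕ)) + lucasZ ((m:ℕ)) := by
        have := lucasZ_rec (m:ℤ)
        rwa [show (m:ℤ)+2 = ((m+2:ℕ):ℤ) by push_cast; ring,
            show (m:ℤ)+1 = ((m+1:ℕ):ℤ) by push_cast; ring] at this
      have RF : fibZ ((m+2:ℕ)) = fibZ ((m+1:ℕ)) + fibZ ((m:ℕ)) := by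
        have := fibZ_rec (m:ℤ)
        rwa [show (m:ℤ)+2 = ((m+2:ℕ):ℤ) by push_cast; ring,
            show (m:ℤ)+1 = ((m+1:ℕ):ℤ) by push_cast; ring] at this
      have sgn2 : ((-1:ℤ))^(m+2) = (-1)^m := by ring
      have sgn1 : ((-1:ℤ))^(m+1) = -(-1)^m := by ring
      obtain ⟨ih1a, ih1b⟩ := ih1
      obtain ⟨ih0a, ih0b⟩ := ih0
      rw [sgn1] at ih1a ih1b
      have R2' : (-1:ℤ)^m * lucasZ (t-(m:ℕ)) =
          (-1:ℤ)^m * lucasZ (t-(m+1:ℕ)) + (-1:ℤ)^m * lucasZ (t-(m+2:ℕ)) := by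
        rw [R2]; ring
      constructor
      · rw [sgn2, R1, RL]
        nlinarith [R2', ih1a, ih0a]
      · rw [sgn2, R1, RF]
        nlinarith [R2', ih1b, ih0b]

def Acoef (m k : ℕ) : ℚ :=
  (-1 : ℚ) ^ (m - k) * ((m : ℚ) / (m + k)) * (Nat.choose (m + k) (m - k))

lemma Acoef_rec (n k : ℕ) (hk : k < n) :
    Acoef (n+2) (k+1) = Acoef (n+1) k - 2 * Acoef (n+1) (k+1) - Acoef n (k+1) := by
  obtain ⟨d, rfl⟩ : ∃ d, n = k+1+d := ⟨n-k-1, by omega⟩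
  unfold Acoef
  rw [show k+1+d+2-(k+1) = d+2 by omega, show k+1+d+2+(k+1) = d+2*k+4 by omega,
      show k+1+d+1-k = d+2 by omega, show k+1+d+1+k = d+2*k+2 by omega,
      show k+1+d+1-(k+1) = d+1 by omega, show k+1+d+1+(k+1) = d+2*k+3 by omega,
      show k+1+d-(k+1) = d by omega, show k+1+d+(k+1) = d+2*k+2 by omega]
  push_cast
  linear_combination ((-1:ℚ)^d) * key k d

lemma Acoef_zero (m : ℕ) (hm : 1 ≤ m) : Acoef m 0 = (-1:ℚ)^m := by
  unfold Acoef
  have : (m:ℚ) ≠ 0 := Nat.cast_ne_zero.mpr (by omega)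
  simp [this]

lemma Acoef_top (m : ℕ) : Acoef (m+1) (m+1) = 1/2 := by
  unfold Acoef
  rw [show m+1-(m+1) = 0 by omega, show m+1+(m+1) = 2*(m+1) by ring]
  rw [Nat.choose_zero_right]
  push_cast
  have : (m:ℚ) + 1 ≠ 0 := by positivity
  field_simp
  ring

lemma Acoef_subtop (m : ℕ) : Acoef (m+1) m = -((m:ℚ)+1) := by
  unfold Acoef
  rw [show m+1-m = 1 by omega, show m+1+m = 2*m+1 by ring, Nat.choose_one_right]
  push_cast
  have : 2*(m:ℚ) + 1 ≠ 0 := by positivity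
  field_simp
  ring

lemma rec_sum (n : ℕ) (hn : 1 ≤ n) (f : ℕ → ℚ) :
    ∑ k ∈ range (n+3), Acoef (n+2) k * f k
    = ∑ k ∈ range (n+2), Acoef (n+1) k * f (k+1)
      - 2 * ∑ k ∈ range (n+2), Acoef (n+1) k * f k
      - ∑ k ∈ range (n+1), Acoef n k * f k := by
  have S0 : ∑ k ∈ range (n+3), Acoef (n+2) k * f k
      = (∑ k ∈ range (n+2), Acoef (n+2) (k+1) * f (k+1)) + Acoef (n+2) 0 * f 0 :=
    Finset.sum_range_succ' _ (n+2)
  have S2 : ∑ k ∈ range (n+2), Acoef (n+1) k * f k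
      = (∑ k ∈ range (n+1), Acoef (n+1) (k+1) * f (k+1)) + Acoef (n+1) 0 * f 0 :=
    Finset.sum_range_succ' _ (n+1)
  have S3 : ∑ k ∈ range (n+1), Acoef n k * f k
      = (∑ k ∈ range n, Acoef n (k+1) * f (k+1)) + Acoef n 0 * f 0 :=
    Finset.sum_range_succ' _ n
  have S0' : ∑ k ∈ range (n+2), Acoef (n+2) (k+1) * f (k+1)
      = (∑ k ∈ range n, Acoef (n+2) (k+1) * f (k+1))
        + Acoef (n+2) (n+1) * f (n+1) + Acoef (n+2) (n+2) * f (n+2) := by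
    rw [Finset.sum_range_succ, Finset.sum_range_succ]
  have S1' : ∑ k ∈ range (n+2), Acoef (n+1) k * f (k+1)
      = (∑ k ∈ range n, Acoef (n+1) k * f (k+1))
        + Acoef (n+1) n * f (n+1) + Acoef (n+1) (n+1) * f (n+2) := by
    rw [Finset.sum_range_succ, Finset.sum_range_succ]
  have S2' : ∑ k ∈ range (n+1), Acoef (n+1) (k+1) * f (k+1)
      = (∑ k ∈ range n, Acoef (n+1) (k+1) * f (k+1))
        + Acoef (n+1) (n+1) * f (n+1) := by
    rw [Finset.sum_range_succ]
  have Hsum : ∑ k ∈ range n, Acoef (n+2) (k+1) * f (k+1)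
      = ∑ k ∈ range n, (Acoef (n+1) k * f (k+1) - 2*(Acoef (n+1) (k+1) * f (k+1))
          - Acoef n (k+1) * f (k+1)) := by
    refine Finset.sum_congr rfl (fun k hk => ?_)
    rw [Acoef_rec n k (mem_range.mp hk)]
    ring
  have Hsplit : ∑ k ∈ range n, (Acoef (n+1) k * f (k+1) - 2*(Acoef (n+1) (k+1) * f (k+1))
          - Acoef n (k+1) * f (k+1))
      = (∑ k ∈ range n, Acoef (n+1) k * f (k+1))
        - 2*(∑ k ∈ range n, Acoef (n+1) (k+1) * f (k+1))
        - ∑ k ∈ range n, Acoef n (k+1) * f (k+1) := by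
    rw [Finset.sum_sub_distrib, Finset.sum_sub_distrib, ← Finset.mul_sum]
  have hb0 : Acoef (n+2) 0 = -2 * Acoef (n+1) 0 - Acoef n 0 := by
    rw [Acoef_zero _ (by omega), Acoef_zero _ (by omega), Acoef_zero _ (by omega)]
    ring
  have hb1 : Acoef (n+2) (n+1) = Acoef (n+1) n - 2 * Acoef (n+1) (n+1) := by
    rw [show n+2 = (n+1)+1 from rfl, Acoef_subtop (n+1), Acoef_subtop n, Acoef_top n]
    push_cast
    ring
  have hb2 : Acoef (n+2) (n+2) = Acoef (n+1) (n+1) := by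
    rw [show n+2 = (n+1)+1 from rfl, Acoef_top (n+1), Acoef_top n]
  rw [S0, S0', S2, S3, Hsum, Hsplit, S1', S2', hb0, hb1, hb2]
  ring

lemma crec (x : ℤ) : (lucasZ (x+2) : ℚ) = lucasZ (x+1) + lucasZ x := by
  exact_mod_cast lucasZ_rec x

lemma crec' {a b c x : ℤ} (ha : a = x+2) (hb : b = x+1) (hc : c = x) :
    (lucasZ a : ℚ) = lucasZ b + lucasZ c := by
  rw [ha, hb, hc]; exact crec x

lemma main (n : ℕ) (hn : 1 ≤ n) : ∀ t : ℤ,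
    ∑ k ∈ range (n+1), Acoef n k * (lucasZ (3*(k:ℤ)+t) : ℚ)
    = ((lucasZ (t+(n:ℤ)) : ℚ) + (lucasZ (t-(n:ℤ)) : ℚ))/2 := by
  induction n using Nat.strong_induction_on with
  | _ n ih =>
    match n with
    | 0 => omega
    | 1 =>
      intro t
      rw [Finset.sum_range_succ, Finset.sum_range_succ, Finset.sum_range_zero]
      rw [Acoef_zero 1 (by omega), show (1:ℕ) = 0+1 from rfl, Acoef_top 0]
      rw [show 3*((0:ℕ):ℤ)+t = t by push_cast; ring,
          show 3*((1:ℕ):ℤ)+t = t+3 by push_cast; ring]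
      have h3 : (lucasZ (t+3) : ℚ) = lucasZ (t+2) + lucasZ (t+1) :=
        crec' (x := t+1) (by ring) (by ring) (by ring)
      have h2 : (lucasZ (t+2) : ℚ) = lucasZ (t+1) + lucasZ t :=
        crec' (x := t) (by ring) (by ring) (by ring)
      have h1 : (lucasZ (t+1) : ℚ) = lucasZ t + lucasZ (t-1) :=
        crec' (x := t-1) (by ring) (by ring) (by ring)
      push_cast
      norm_num
      linarith [h3, h2, h1]
    | 2 =>
      intro t
      rw [Finset.sum_range_succ, Finset.sum_range_succ, Finset.sum_range_succ,
          Finset.sum_range_zero]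
      rw [Acoef_zero 2 (by omega), show (2:ℕ) = 1+1 from rfl, Acoef_top 1, Acoef_subtop 1]
      rw [show 3*((0:ℕ):ℤ)+t = t by push_cast; ring,
          show 3*((1:ℕ):ℤ)+t = t+3 by push_cast; ring,
          show 3*((2:ℕ):ℤ)+t = t+6 by push_cast; ring]
      have r0 : (lucasZ t : ℚ) = lucasZ (t-1) + lucasZ (t-2) :=
        crec' (x := t-2) (by ring) (by ring) (by ring)
      have r1 : (lucasZ (t+1) : ℚ) = lucasZ t + lucasZ (t-1) :=
        crec' (x := t-1) (by ring) (by ring) (by ring)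
      have r2 : (lucasZ (t+2) : ℚ) = lucasZ (t+1) + lucasZ t :=
        crec' (x := t) (by ring) (by ring) (by ring)
      have r3 : (lucasZ (t+3) : ℚ) = lucasZ (t+2) + lucasZ (t+1) :=
        crec' (x := t+1) (by ring) (by ring) (by ring)
      have r4 : (lucasZ (t+4) : ℚ) = lucasZ (t+3) + lucasZ (t+2) :=
        crec' (x := t+2) (by ring) (by ring) (by ring)
      have r5 : (lucasZ (t+5) : ℚ) = lucasZ (t+4) + lucasZ (t+3) :=
        crec' (x := t+3) (by ring) (by ring) (by ring)
      have r6 : (lucasZ (t+6) : ℚ) = lucasZ (t+5) + lucasZ (t+4) :=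
        crec' (x := t+4) (by ring) (by ring) (by ring)
      push_cast
      norm_num
      linarith [r0, r1, r2, r3, r4, r5, r6]
    | (m+3) =>
      intro t
      have R := rec_sum (m+1) (by omega) (fun k => (lucasZ (3*(k:ℤ)+t) : ℚ))
      rw [show m+1+3 = m+3+1 by omega, show m+1+2 = m+3 by omega,
          show m+1+1 = m+2 by omega] at R
      have conv1 : ∑ k ∈ range (m+3), Acoef (m+2) k * (lucasZ (3*((k+1:ℕ):ℤ)+t) : ℚ)
          = ∑ k ∈ range (m+2+1), Acoef (m+2) k * (lucasZ (3*(k:ℤ)+(t+3)) : ℚ) := by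
        rw [show m+3 = m+2+1 by omega]
        exact Finset.sum_congr rfl fun k _ => by
          rw [show 3*((k+1:ℕ):ℤ)+t = 3*(k:ℤ)+(t+3) by push_cast; ring]
      rw [conv1] at R
      have ihA := ih (m+2) (by omega) (by omega) (t+3)
      have ihB := ih (m+2) (by omega) (by omega) t
      have ihC := ih (m+1) (by omega) (by omega) t
      rw [show m+3 = m+2+1 by omega] at R
      rw [R, ihB, ihC]
      rw [show (∑ k ∈ range (m+2+1), Acoef (m+2) k * (lucasZ (3*(k:ℤ)+(t+3)) : ℚ)) =
        ((lucasZ ((t+3)+((m+2:ℕ):ℤ)) : ℚ) + (lucasZ ((t+3)-((m+2:ℕ):ℤ)) : ℚ))/2 from ihA]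
      -- normalize all lucasZ arguments
      rw [show (t+3)+((m+2:ℕ):ℤ) = t+(m:ℤ)+5 by push_cast; ring,
          show (t+3)-((m+2:ℕ):ℤ) = t-(m:ℤ)+1 by push_cast; ring,
          show t+((m+2:ℕ):ℤ) = t+(m:ℤ)+2 by push_cast; ring,
          show t-((m+2:ℕ):ℤ) = t-(m:ℤ)-2 by push_cast; ring,
          show t+((m+1:ℕ):ℤ) = t+(m:ℤ)+1 by push_cast; ring,
          show t-((m+1:ℕ):ℤ) = t-(m:ℤ)-1 by push_cast; ring,
          show t+((m+3:ℕ):ℤ) = t+(m:ℤ)+3 by push_cast; ring,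
          show t-((m+3:ℕ):ℤ) = t-(m:ℤ)-3 by push_cast; ring]
      have p1 : (lucasZ (t+(m:ℤ)+3) : ℚ) = lucasZ (t+(m:ℤ)+2) + lucasZ (t+(m:ℤ)+1) :=
        crec' (x := t+(m:ℤ)+1) (by ring) (by ring) (by ring)
      have p2 : (lucasZ (t+(m:ℤ)+4) : ℚ) = lucasZ (t+(m:ℤ)+3) + lucasZ (t+(m:ℤ)+2) :=
        crec' (x := t+(m:ℤ)+2) (by ring) (by ring) (by ring)
      have p3 : (lucasZ (t+(m:ℤ)+5) : ℚ) = lucasZ (t+(m:ℤ)+4) + lucasZ (t+(m:ℤ)+3) :=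
        crec' (x := t+(m:ℤ)+3) (by ring) (by ring) (by ring)
      have q1 : (lucasZ (t-(m:ℤ)-1) : ℚ) = lucasZ (t-(m:ℤ)-2) + lucasZ (t-(m:ℤ)-3) :=
        crec' (x := t-(m:ℤ)-3) (by ring) (by ring) (by ring)
      have q2 : (lucasZ (t-(m:ℤ)) : ℚ) = lucasZ (t-(m:ℤ)-1) + lucasZ (t-(m:ℤ)-2) :=
        crec' (x := t-(m:ℤ)-2) (by ring) (by ring) (by ring)
      have q3 : (lucasZ (t-(m:ℤ)+1) : ℚ) = lucasZ (t-(m:ℤ)) + lucasZ (t-(m:ℤ)-1) :=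
        crec' (x := t-(m:ℤ)-1) (by ring) (by ring) (by ring)
      linarith [p1, p2, p3, q1, q2, q3]

theorem stmt_14 (n : ℕ) (hn : 0 < n) (t : ℤ) :
    (Odd n →
      ∑ k ∈ range (n + 1), (-1 : ℚ) ^ (n - k) * ((n : ℚ) / (n + k)) *
        (Nat.choose (n + k) (n - k)) * (lucasZ (3 * k + t) : ℚ) =
      5 / 2 * (fibZ t : ℚ) * (fibZ n : ℚ)) ∧
    (Even n →
      ∑ k ∈ range (n + 1), (-1 : ℚ) ^ (n - k) * ((n : ℚ) / (n + k)) *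
        (Nat.choose (n + k) (n - k)) * (lucasZ (3 * k + t) : ℚ) =
      1 / 2 * (lucasZ t : ℚ) * (lucasZ n : ℚ)) := by
  have hs : ∑ k ∈ range (n + 1), (-1 : ℚ) ^ (n - k) * ((n : ℚ) / (n + k)) *
        (Nat.choose (n + k) (n - k)) * (lucasZ (3 * k + t) : ℚ)
      = ((lucasZ (t+(n:ℤ)) : ℚ) + (lucasZ (t-(n:ℤ)) : ℚ))/2 := by
    rw [← main n hn t]
    exact Finset.sum_congr rfl fun k _ => rfl
  obtain ⟨hA, hB⟩ := lucasZ_add n t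
  constructor
  · intro hodd
    rw [hodd.neg_one_pow] at hB
    have hB' : lucasZ (t+(n:ℤ)) + lucasZ (t-(n:ℤ)) = 5 * fibZ t * fibZ (n:ℤ) := by
      linarith [hB]
    have hq : (lucasZ (t+(n:ℤ)) : ℚ) + (lucasZ (t-(n:ℤ)) : ℚ)
        = 5 * (fibZ t : ℚ) * (fibZ (n:ℤ) : ℚ) := by exact_mod_cast hB'
    rw [hs, hq]; ring
  · intro heven
    rw [heven.neg_one_pow] at hA
    have hA' : lucasZ (t+(n:ℤ)) + lucasZ (t-(n:ℤ)) = lucasZ t * lucasZ (n:ℤ) := by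
      linarith [hA]
    have hq : (lucasZ (t+(n:ℤ)) : ℚ) + (lucasZ (t-(n:ℤ)) : ℚ)
        = (lucasZ t : ℚ) * (lucasZ (n:ℤ) : ℚ) := by exact_mod_cast hA'
    rw [hs, hq]; ring
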